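/- Let a > 0, b > 0, let k be a nonnegative integer, and set λ = a²/(4b). Then 2 b^{(k+1)/2} ∫_0^∞ x^k exp{−ax − bx²} dx = e^{λ} Σ_{h=0}^{k} C(k,h) (−1)^{k−h} λ^{(k−h)/2} Γ((h+1)/2, λ), where C(k,h) denotes the binomial coefficient. -/

import Mathlib

open MeasureTheory Set Real Filter

lemma aux_pow_gauss_integrable (h : ℕ) :
    Integrable (fun u : ℝ => u ^ h * Real.exp (-u ^ 2)) := by
  have h1 : (-1 : ℝ) < (h : ℝ) := lt_of_lt_of_le (by norm_num) (Nat.cast_nonneg h)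
  have := integrable_rpow_mul_exp_neg_mul_sq (b := 1) one_pos h1
  simpa [Real.rpow_natCast] using this

/-- For `a, b > 0`, a nonnegative integer `k`, and `λ = a²/(4b)`,
`2 b^((k+1)/2) ∫_0^∞ x^k e^{-ax - bx²} dx
  = e^λ Σ_{h=0}^{k} C(k,h) (-1)^{k-h} λ^{(k-h)/2} Γ((h+1)/2, λ)`,
with `Γ(α,λ) = ∫_λ^∞ t^{α-1} e^{-t} dt` the upper incomplete gamma function. -/
theorem integral_pow_mul_exp_eq_sum_incomplete_gamma
    (a b : ℝ) (ha : 0 < a) (hb : 0 < b) (k : ℕ)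
    (lam : ℝ) (hlam : lam = a ^ 2 / (4 * b))
    (Ginc : ℝ → ℝ → ℝ)
    (hGinc : ∀ α x, Ginc α x = ∫ t in Set.Ioi x, t ^ (α - 1) * Real.exp (-t)) :
    2 * b ^ (((k : ℝ) + 1) / 2) *
        ∫ x in Set.Ioi (0 : ℝ), x ^ k * Real.exp (-(a * x) - b * x ^ 2)
      = Real.exp lam *
          ∑ h ∈ Finset.range (k + 1),
            (Nat.choose k h : ℝ) * (-1 : ℝ) ^ (k - h) * lam ^ (((k : ℝ) - (h : ℝ)) / 2)
              * Ginc (((h : ℝ) + 1) / 2) lam := by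
  have hlam0 : 0 < lam := by rw [hlam]; positivity
  set s : ℝ := Real.sqrt lam with hsdef
  set c : ℝ := Real.sqrt b with hcdef
  have hs0 : 0 < s := Real.sqrt_pos.mpr hlam0
  have hc0 : 0 < c := Real.sqrt_pos.mpr hb
  have hs2 : s ^ 2 = lam := Real.sq_sqrt hlam0.le
  have hc2 : c ^ 2 = b := Real.sq_sqrt hb.le
  have hcs : c * s = a / 2 := by
    rw [hcdef, hsdef, ← Real.sqrt_mul hb.le, hlam,
      show b * (a ^ 2 / (4 * b)) = (a / 2) ^ 2 by field_simp; ring]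
    exact Real.sqrt_sq (by linarith)
  have hkey : ∀ x : ℝ, lam - (c * x + s) ^ 2 = -(a * x) - b * x ^ 2 := by
    intro x
    linear_combination (-(x ^ 2)) * hc2 - hs2 - (2 * x) * hcs
  have hint := aux_pow_gauss_integrable
  set g : ℝ → ℝ := fun u => (u - s) ^ k * Real.exp (lam - u ^ 2) with hgdef
  have hg_sum : g = fun u => ∑ h ∈ Finset.range (k + 1),
      ((k.choose h : ℝ) * (-s) ^ (k - h) * Real.exp lam) *
        (u ^ h * Real.exp (-u ^ 2)) := by
    funext u
    rw [hgdef]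
    simp only
    rw [sub_eq_add_neg, add_pow, Finset.sum_mul]
    refine Finset.sum_congr rfl fun h _ => ?_
    rw [show lam - u ^ 2 = lam + -(u ^ 2) by ring, Real.exp_add]
    ring
  have hg_int : Integrable g := by
    rw [hg_sum]
    exact integrable_finset_sum _ fun h _ => (hint h).const_mul _
  have hg_cont : Continuous g := by
    refine ((continuous_id.sub continuous_const).pow k).mul ?_
    exact Real.continuous_exp.comp (continuous_const.sub (continuous_pow 2))
  -- Substitution 1 : u = c * x + s
  have sub1 : (∫ x in Ioi (0 : ℝ), (g ∘ fun x => c * x + s) x * c) = ∫ u in Ioi s, g u := by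
    have h1 : Integrable (fun u : ℝ => g (u + s)) := hg_int.comp_add_right s
    have h2 : Integrable (fun x : ℝ => g (c * x + s)) := h1.comp_mul_left' hc0.ne'
    have := integral_comp_mul_deriv_Ioi (f := fun x => c * x + s) (f' := fun _ => c)
      (g := g) (a := 0)
      (((continuous_const.mul continuous_id).add continuous_const).continuousOn)
      (tendsto_atTop_add_const_right atTop s
        (Filter.Tendsto.const_mul_atTop hc0 tendsto_id))
      (fun x _ => by
        simpa using (((hasDerivAt_id x).const_mul c).add_const s).hasDerivWithinAt)
      (hg_cont.continuousOn) (hg_int.integrableOn)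
      (by simpa [Function.comp] using (h2.mul_const c).integrableOn)
    simpa using this
  have step1 : c ^ (k + 1) * (∫ x in Ioi (0 : ℝ), x ^ k * Real.exp (-(a * x) - b * x ^ 2))
      = ∫ u in Ioi s, g u := by
    rw [← sub1, ← integral_const_mul]
    refine setIntegral_congr_fun measurableSet_Ioi fun x _ => ?_
    simp only [Function.comp, hgdef]
    rw [add_sub_cancel_right, hkey x, mul_pow]
    ring
  have step2 : (∫ u in Ioi s, g u)
      = ∑ h ∈ Finset.range (k + 1), ((k.choose h : ℝ) * (-s) ^ (k - h) * Real.exp lam) *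
          ∫ u in Ioi s, u ^ h * Real.exp (-u ^ 2) := by
    rw [hg_sum, integral_finset_sum _ (fun h _ => ((hint h).const_mul _).integrableOn)]
    exact Finset.sum_congr rfl fun h _ => integral_const_mul _ _
  -- Substitution 2 : t = u ^ 2
  have step3 : ∀ h : ℕ, Ginc (((h : ℝ) + 1) / 2) lam
      = 2 * ∫ u in Ioi s, u ^ h * Real.exp (-u ^ 2) := by
    intro h
    rw [hGinc]
    set G : ℝ → ℝ := fun t => t ^ ((((h : ℝ) + 1) / 2) - 1) * Real.exp (-t) with hG
    have hpt : ∀ u : ℝ, 0 < u →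
        G (u ^ 2) * (2 * u) = 2 * (u ^ h * Real.exp (-u ^ 2)) := by
      intro u hu0
      have e1 : (u ^ 2 : ℝ) ^ ((((h : ℝ) + 1) / 2) - 1) = u ^ ((h : ℝ) - 1) := by
        rw [← Real.rpow_natCast u 2, ← Real.rpow_mul hu0.le]
        norm_num
        ring_nf
      have e2 : u ^ ((h : ℝ) - 1) * u = u ^ h := by
        calc u ^ ((h : ℝ) - 1) * u = u ^ (((h : ℝ) - 1) + 1) := by
              rw [Real.rpow_add hu0, Real.rpow_one]
          _ = u ^ ((h : ℝ)) := by norm_num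
          _ = u ^ h := Real.rpow_natCast u h
      rw [hG]
      simp only
      rw [e1]
      calc u ^ ((h : ℝ) - 1) * Real.exp (-u ^ 2) * (2 * u)
          = 2 * ((u ^ ((h : ℝ) - 1) * u) * Real.exp (-u ^ 2)) := by ring
        _ = 2 * (u ^ h * Real.exp (-u ^ 2)) := by rw [e2]
    have hg1 : IntegrableOn G ((fun u : ℝ => u ^ 2) '' Ici s) := by
      have hsub : (fun u : ℝ => u ^ 2) '' Ici s ⊆ Ioi 0 := by
        rintro t ⟨u, hu, rfl⟩
        have : (0 : ℝ) < u := hs0.trans_le hu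
        exact mem_Ioi.mpr (by positivity)
      refine IntegrableOn.mono_set ?_ hsub
      have hpos : (0 : ℝ) < ((h : ℝ) + 1) / 2 := by positivity
      exact (Real.GammaIntegral_convergent hpos).congr_fun
        (fun t _ => mul_comm _ _) measurableSet_Ioi
    have sub2 := integral_comp_mul_deriv_Ioi (f := fun u : ℝ => u ^ 2)
      (f' := fun u => 2 * u) (g := G) (a := s)
      ((continuous_pow 2).continuousOn)
      (tendsto_pow_atTop two_ne_zero)
      (fun u _ => by simpa using (hasDerivAt_pow 2 u).hasDerivWithinAt)
      (by
        rintro t ⟨u, hu, rfl⟩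
        have hu0 : (0 : ℝ) < u := hs0.trans hu
        have : (0 : ℝ) < u ^ 2 := by positivity
        exact ((Real.continuousAt_rpow_const _ _ (Or.inl this.ne')).mul
          (Real.continuous_exp.comp continuous_neg).continuousAt).continuousWithinAt)
      hg1
      (by
        refine IntegrableOn.congr_fun (((hint h).const_mul 2).integrableOn)
          (fun u hu => ?_) measurableSet_Ici
        have hu0 : (0 : ℝ) < u := hs0.trans_le hu
        exact (hpt u hu0).symm)
    simp only [Function.comp] at sub2
    rw [hs2] at sub2
    rw [← sub2, ← integral_const_mul]
    refine setIntegral_congr_fun measurableSet_Ioi fun u hu => ?_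
    exact hpt u (hs0.trans hu)
  have bpow : b ^ (((k : ℝ) + 1) / 2) = c ^ (k + 1) := by
    rw [hcdef, ← Real.rpow_natCast (Real.sqrt b) (k + 1), Real.sqrt_eq_rpow,
      ← Real.rpow_mul hb.le]
    congr 1
    push_cast
    ring
  have lampow : ∀ h ∈ Finset.range (k + 1),
      lam ^ (((k : ℝ) - (h : ℝ)) / 2) = s ^ (k - h) := by
    intro h hh
    have hhk : h ≤ k := Nat.lt_succ_iff.mp (Finset.mem_range.mp hh)
    have hcast : ((k : ℝ) - (h : ℝ)) = ((k - h : ℕ) : ℝ) := by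
      rw [Nat.cast_sub hhk]
    rw [hcast, hsdef, Real.sqrt_eq_rpow, ← Real.rpow_natCast (lam ^ ((1 : ℝ)/2)) (k - h),
      ← Real.rpow_mul hlam0.le]
    congr 1
    ring
  rw [bpow, mul_assoc, step1, step2, Finset.mul_sum, Finset.mul_sum]
  refine Finset.sum_congr rfl fun h hh => ?_
  rw [step3 h, lampow h hh, neg_pow]
  ring
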